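/- The two-player game on outcomes {x,y,z} where player 1 chooses between x and moving to player 2, who chooses between y and z, with preferences y ≺₁ x ≺₁ z and x ≺₂ z ≺₂ y, has no Strong Nash Equilibrium, and its {I,L}-dynamics graph on the four strategy profiles {ll, lr, rl, rr} contains the cycle ll ⇀ rr ⇀ rl ⇀ ll. -/

import Mathlib

namespace SeqGame

inductive GameTree (N O : Type) : Type where
  | leaf (o : O) : GameTree N O
  | node (i : N) (children : List (GameTree N O)) : GameTree N O

namespace GameTree

variable {N O : Type}

/-- The subtree of `T` at position `p` (a list of child indices), if it exists. -/
def subtree : GameTree N O → List ℕ → Option (GameTree N O)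
  | t, [] => some t
  | leaf _, _ :: _ => none
  | node _ c, k :: p =>
    match getElem? c k with
    | some t => subtree t p
    | none => none

/-- A strategy profile: a choice of a child index at every position. -/
abbrev Profile := List ℕ → ℕ

/-- A profile is legal if it chooses an existing child at every internal node. -/
def Legal (T : GameTree N O) (s : Profile) : Prop :=
  ∀ p i c, T.subtree p = some (node i c) → s p < c.length

/-- The profiles `s` and `s'` differ at the (valid, internal) node `p`. -/
def Differs (T : GameTree N O) (s s' : Profile) (p : List ℕ) : Prop :=
  (∃ i c, T.subtree p = some (node i c)) ∧ s p ≠ s' p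

/-- The outcome reached when playing according to the profile `s`. -/
def outcome : GameTree N O → Profile → Option O
  | leaf o, _ => some o
  | node _ c, s =>
    match h : getElem? c (s []) with
    | some t => outcome t (fun p => s (s [] :: p))
    | none => none
decreasing_by
  have hm : t ∈ c := by
    exact List.mem_of_getElem? h
  have := List.sizeOf_lt_of_mem hm
  simp only [node.sizeOf_spec]
  omega

/-- The profile `s` re-rooted at position `p`. -/
def shift (s : Profile) (p : List ℕ) : Profile := fun q => s (p ++ q)

/-- The owner of the node at position `p`, if it is internal. -/
def ownerAt (T : GameTree N O) (p : List ℕ) : Option N :=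
  match T.subtree p with
  | some (node i _) => some i
  | _ => none

/-- `p` lies along the play induced by `s`. -/
def OnPlay (s : Profile) (p : List ℕ) : Prop :=
  ∀ q k, (q ++ [k]) <+: p → s q = k

/-- Improvement property: every player who changes strictly improves the outcome. -/
def Iprop (T : GameTree N O) (pref : N → O → O → Prop) (s s' : Profile) : Prop :=
  ∀ p i c, T.subtree p = some (node i c) → s p ≠ s' p →
    ∃ x y, T.outcome s = some x ∧ T.outcome s' = some y ∧ pref i x y

/-- Subgame improvement property. -/
def SIprop (T : GameTree N O) (pref : N → O → O → Prop) (s s' : Profile) : Prop :=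
  ∀ p i c, T.subtree p = some (node i c) → s p ≠ s' p →
    ∃ x y, outcome (node i c) (shift s p) = some x ∧
      outcome (node i c) (shift s' p) = some y ∧ pref i x y

/-- Laziness property: all changed nodes lie along the play induced by `s'`. -/
def Lprop (T : GameTree N O) (s s' : Profile) : Prop :=
  ∀ p, Differs T s s' p → OnPlay s' p

/-- One player property: at most one player changes his strategy. -/
def P1prop (T : GameTree N O) (s s' : Profile) : Prop :=
  ∃ i : N, ∀ p, Differs T s s' p → T.ownerAt p = some i

/-- Atomicity property: at most one node changes. -/
def Aprop (T : GameTree N O) (s s' : Profile) : Prop :=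
  ∀ p q, Differs T s s' p → Differs T s s' q → p = q

/-- Names of the update properties. -/
inductive Upd : Type | I | SI | L | P1 | A
deriving DecidableEq

/-- Interpretation of an update property name. -/
def holds (T : GameTree N O) (pref : N → O → O → Prop) : Upd → Profile → Profile → Prop
  | .I => Iprop T pref
  | .SI => SIprop T pref
  | .L => Lprop T
  | .P1 => P1prop T
  | .A => Aprop T

/-- The X-dynamics: an actual update (between legal profiles) satisfying
all properties in `X`. -/
def XDyn (X : Set Upd) (T : GameTree N O) (pref : N → O → O → Prop)
    (s s' : Profile) : Prop :=
  Legal T s ∧ Legal T s' ∧ (∃ p, Differs T s s' p) ∧ ∀ u ∈ X, holds T pref u s s'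

/-- A dynamics terminates iff there is no infinite update sequence. -/
def Terminates (D : Profile → Profile → Prop) : Prop :=
  ¬ ∃ f : ℕ → Profile, ∀ n, D (f n) (f (n + 1))

/-- `s'` is a deviation from `s` by the coalition `I`. -/
def Deviation (T : GameTree N O) (I : Set N) (s s' : Profile) : Prop :=
  Legal T s' ∧ ∀ p i c, T.subtree p = some (node i c) → i ∉ I → s p = s' p

/-- Nash equilibrium. -/
def IsNE (T : GameTree N O) (pref : N → O → O → Prop) (s : Profile) : Prop :=
  ∀ i s', Deviation T {i} s s' →
    ∀ x y, T.outcome s = some x → T.outcome s' = some y → ¬ pref i x y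

/-- Subgame perfect equilibrium: an NE in every subgame. -/
def IsSPE (T : GameTree N O) (pref : N → O → O → Prop) (s : Profile) : Prop :=
  ∀ p t, T.subtree p = some t → IsNE t pref (shift s p)

/-- Strong Nash equilibrium (Aumann). -/
def IsSNE (T : GameTree N O) (pref : N → O → O → Prop) (s : Profile) : Prop :=
  ∀ I : Set N, I.Nonempty → ∀ s', Deviation T I s s' →
    ∃ i ∈ I, ∀ x y, T.outcome s = some x → T.outcome s' = some y → ¬ pref i x y

/-- A relation is acyclic if it has no cycle. -/
def Acyclic (r : O → O → Prop) : Prop := ∀ x, ¬ Relation.TransGen r x x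

/-- Incomparability. -/
def Incomp (r : O → O → Prop) (x y : O) : Prop := ¬ r x y ∧ ¬ r y x

/-- Strict weak order: irreflexive, transitive, with transitive incomparability. -/
def IsSWO (r : O → O → Prop) : Prop :=
  (∀ x, ¬ r x x) ∧ (∀ x y z, r x y → r y z → r x z) ∧
    (∀ x y z, Incomp r x y → Incomp r y z → Incomp r x z)

/-- Strict linear order: irreflexive, transitive and total. -/
def IsSLO (r : O → O → Prop) : Prop :=
  (∀ x, ¬ r x x) ∧ (∀ x y z, r x y → r y z → r x z) ∧
    (∀ x y, x ≠ y → r x y ∨ r y x)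

/-- Absence of the main pattern. -/
def OutOfMainPattern (pref : N → O → O → Prop) : Prop :=
  ∀ (i j : N) (x y z : O),
    ¬ (pref i x y ∧ pref i y z ∧ pref j y z ∧ pref j z x)

/-- Absence of the secondary pattern. -/
def OutOfSecondaryPattern (pref : N → O → O → Prop) : Prop :=
  ∀ (i j : N) (w x y z : O),
    ¬ (pref i w x ∧ pref i x y ∧ pref i y z ∧
       Incomp (pref j) x z ∧ pref j z w ∧ Incomp (pref j) w y)

/-- Absence of both patterns. -/
def OutOfPattern (pref : N → O → O → Prop) : Prop :=
  OutOfMainPattern pref ∧ OutOfSecondaryPattern pref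

/-- The preferences can be layered: there is an ordered partition of the
outcomes (given by a layer-index function) such that higher layers are
unanimously weakly preferred, and within a layer no two players agree on
one pair while disagreeing on another pair. -/
def CanBeLayered (pref : N → O → O → Prop) : Prop :=
  ∃ ℓ : O → ℕ,
    (∀ x y, ℓ x < ℓ y → ∀ i, ¬ pref i y x) ∧
    (∀ (i j : N) (w x y z : O), ℓ w = ℓ x → ℓ x = ℓ y → ℓ y = ℓ z →
      ¬ (pref i x y ∧ pref j x y ∧ pref i w z ∧ pref j z w))

end GameTree
end SeqGame

namespace SeqGame.GameTree

/-- Outcomes `x = 0`, `y = 1`, `z = 2`; preferences `y ≺₁ x ≺₁ z` and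
`x ≺₂ z ≺₂ y`. -/
def pref16 : Fin 2 → Fin 3 → Fin 3 → Prop := fun i a b =>
  if i = 0 then (a = 1 ∧ b = 0) ∨ (a = 1 ∧ b = 2) ∨ (a = 0 ∧ b = 2)
  else (a = 0 ∧ b = 2) ∨ (a = 0 ∧ b = 1) ∨ (a = 2 ∧ b = 1)

/-- Player 1 chooses between `x` and moving to player 2, who chooses
between `y` and `z`. -/
def T16 : GameTree (Fin 2) (Fin 3) :=
  .node 0 [.leaf 0, .node 1 [.leaf 1, .leaf 2]]

/-- The profile `ll`. -/
def sll : Profile := fun _ => 0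

/-- The profile `rr`. -/
def srr : Profile := fun _ => 1

/-- The profile `rl`. -/
def srl : Profile := fun p => if p = [] then 1 else 0


lemma outcome_node' {N O : Type} (i : N) (c : List (GameTree N O)) (s : Profile)
    (t : GameTree N O) (h : getElem? c (s []) = some t) :
    outcome (node i c) s = outcome t (fun p => s (s [] :: p)) := by
  rw [outcome]
  split
  · rename_i t' h'; rw [h'] at h; cases h; rfl
  · rename_i h'; rw [h'] at h; cases h

lemma outcome_leaf' {N O : Type} (o : O) (s : Profile) :
    outcome (leaf o : GameTree N O) s = some o := by rw [outcome]

lemma subtree_T16 : ∀ p (i : Fin 2) c, T16.subtree p = some (node i c) →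
    (p = [] ∧ i = 0 ∧ c = [leaf 0, node 1 [leaf 1, leaf 2]]) ∨
    (p = [1] ∧ i = 1 ∧ c = [leaf 1, leaf 2]) := by
  intro p i c h
  match p with
  | [] => simp [T16, subtree] at h; left; exact ⟨rfl, h.1.symm, h.2.symm⟩
  | 0 :: [] => simp [T16, subtree] at h
  | 0 :: _ :: _ => simp [T16, subtree] at h
  | 1 :: [] =>
      simp [T16, subtree] at h; right; exact ⟨rfl, h.1.symm, h.2.symm⟩
  | 1 :: 0 :: [] => simp [T16, subtree] at h
  | 1 :: 1 :: [] => simp [T16, subtree] at h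
  | 1 :: 0 :: _ :: _ => simp [T16, subtree] at h
  | 1 :: 1 :: _ :: _ => simp [T16, subtree] at h
  | 1 :: (k+2) :: _ => simp [T16, subtree] at h
  | (k+2) :: _ => simp [T16, subtree] at h

lemma subtree_T16_nil : T16.subtree [] = some (node 0 [leaf 0, node 1 [leaf 1, leaf 2]]) := rfl

lemma subtree_T16_one : T16.subtree [1] = some (node 1 [leaf 1, leaf 2]) := by
  simp [T16, subtree]

lemma outcome_T16_x (s : Profile) (h : s [] = 0) : outcome T16 s = some 0 := by
  rw [show T16 = node 0 [leaf 0, node 1 [leaf 1, leaf 2]] from rfl,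
    outcome_node' 0 _ s (leaf 0) (by rw [h]; rfl), outcome_leaf']

lemma outcome_T16_r (s : Profile) (h : s [] = 1) :
    outcome T16 s = outcome (node (1 : Fin 2) [leaf 1, leaf 2]) (fun p => s (1 :: p)) := by
  rw [show T16 = node 0 [leaf 0, node 1 [leaf 1, leaf 2]] from rfl,
    outcome_node' 0 _ s (node 1 [leaf 1, leaf 2]) (by rw [h]; rfl)]
  simp [h]

lemma outcome_T16_y (s : Profile) (h : s [] = 1) (h2 : s [1] = 0) :
    outcome T16 s = some 1 := by
  rw [outcome_T16_r s h, outcome_node' 1 _ _ (leaf 1) (by simp [h2]), outcome_leaf']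

lemma outcome_T16_z (s : Profile) (h : s [] = 1) (h2 : s [1] = 1) :
    outcome T16 s = some 2 := by
  rw [outcome_T16_r s h, outcome_node' 1 _ _ (leaf 2) (by simp [h2]), outcome_leaf']

lemma legal_of (s : Profile) (h : s [] < 2) (h2 : s [1] < 2) : Legal T16 s := by
  intro p i c hsub
  rcases subtree_T16 p i c hsub with ⟨hp, -, hc⟩ | ⟨hp, -, hc⟩ <;> subst hp <;> subst hc
  · simpa using h
  · simpa using h2

lemma legal_sll : Legal T16 sll := legal_of _ (by simp [sll]) (by simp [sll])
lemma legal_srr : Legal T16 srr := legal_of _ (by simp [srr]) (by simp [srr])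
lemma legal_srl : Legal T16 srl := legal_of _ (by simp [srl]) (by simp [srl])

lemma prefix_nil {q : List ℕ} {k : ℕ} (h : (q ++ [k]) <+: ([] : List ℕ)) : False := by
  rcases h with ⟨t, ht⟩
  cases q <;> simp at ht

lemma prefix_one {q : List ℕ} {k : ℕ} (h : (q ++ [k]) <+: [1]) : q = [] ∧ k = 1 := by
  rcases h with ⟨t, ht⟩
  match q with
  | [] =>
    refine ⟨rfl, ?_⟩
    have h2 : k :: t = [1] := by simpa using ht
    injection h2
  | a :: q' =>
    exfalso
    have := congrArg List.length ht
    simp at this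

/-- The game has no strong Nash equilibrium, and its {I,L}-dynamics contains
the cycle `ll ⇀ rr ⇀ rl ⇀ ll`. -/
theorem stmt_16 :
    (¬ ∃ s, Legal T16 s ∧ IsSNE T16 pref16 s) ∧
    XDyn {Upd.I, Upd.L} T16 pref16 sll srr ∧
    XDyn {Upd.I, Upd.L} T16 pref16 srr srl ∧
    XDyn {Upd.I, Upd.L} T16 pref16 srl sll := by
  constructor
  · rintro ⟨s, hleg, hsne⟩
    have h0 : s [] < 2 := by simpa using hleg [] 0 _ subtree_T16_nil
    have h1 : s [1] < 2 := by simpa using hleg [1] 1 _ subtree_T16_one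
    interval_cases hv : (s [])
    · -- outcome x, coalition {0,1} deviates to rr
      obtain ⟨i, -, hni⟩ := hsne Set.univ ⟨0, trivial⟩ srr
        ⟨legal_srr, fun p i c _ hi => absurd trivial hi⟩
      exact hni 0 2 (outcome_T16_x s hv) (outcome_T16_z srr rfl rfl)
        (by fin_cases i <;> simp [pref16])
    · interval_cases hv2 : (s [1])
      · -- outcome y, player 0 deviates to x
        obtain ⟨i, hi, hni⟩ := hsne {0} ⟨0, rfl⟩ (fun p => if p = [] then 0 else s p)
          ⟨legal_of _ (by simp) (by simp <;> omega), by
            intro p i c hsub hi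
            rcases subtree_T16 p i c hsub with ⟨hp, hi0, -⟩ | ⟨hp, hi1, -⟩
            · exact absurd hi0 (by simpa using hi)
            · subst hp; simp⟩
        rw [Set.mem_singleton_iff] at hi; subst hi
        exact hni 1 0 (outcome_T16_y s hv hv2) (outcome_T16_x _ (by simp))
          (by simp [pref16])
      · -- outcome z, player 1 deviates to y
        obtain ⟨i, hi, hni⟩ := hsne {1} ⟨1, rfl⟩ (fun p => if p = [] then s [] else 0)
          ⟨legal_of _ (by simp <;> omega) (by simp), by
            intro p i c hsub hi
            rcases subtree_T16 p i c hsub with ⟨hp, hi0, -⟩ | ⟨hp, hi1, -⟩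
            · subst hp; simp
            · exact absurd hi1 (by simpa using hi)⟩
        rw [Set.mem_singleton_iff] at hi; subst hi
        exact hni 2 1 (outcome_T16_z s hv hv2)
          (outcome_T16_y _ (by simp <;> omega) (by simp)) (by simp [pref16])
  refine ⟨⟨legal_sll, legal_srr, ⟨[], ⟨⟨_, _, subtree_T16_nil⟩, by simp [sll, srr]⟩⟩, ?_⟩,
    ⟨legal_srr, legal_srl, ⟨[1], ⟨⟨_, _, subtree_T16_one⟩, by simp [srr, srl]⟩⟩, ?_⟩,
    ⟨legal_srl, legal_sll, ⟨[], ⟨⟨_, _, subtree_T16_nil⟩, by simp [srl, sll]⟩⟩, ?_⟩⟩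
  · rintro u (rfl | rfl)
    · intro p i c hsub hne
      rcases subtree_T16 p i c hsub with ⟨hp, hi, -⟩ | ⟨hp, hi, -⟩ <;> subst hp <;> subst hi <;>
        exact ⟨0, 2, outcome_T16_x sll rfl, outcome_T16_z srr rfl rfl, by simp [pref16]⟩
    · rintro p ⟨⟨i, c, hsub⟩, -⟩ q k hpre
      rcases subtree_T16 p i c hsub with ⟨hp, -, -⟩ | ⟨hp, -, -⟩ <;> subst hp
      · exact absurd hpre prefix_nil
      · obtain ⟨rfl, rfl⟩ := prefix_one hpre; rfl
  · rintro u (rfl | rfl)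
    · intro p i c hsub hne
      rcases subtree_T16 p i c hsub with ⟨hp, hi, -⟩ | ⟨hp, hi, -⟩ <;> subst hp <;> subst hi
      · simp [srr, srl] at hne
      · exact ⟨2, 1, outcome_T16_z srr rfl rfl, outcome_T16_y srl rfl rfl, by simp [pref16]⟩
    · rintro p ⟨⟨i, c, hsub⟩, hne⟩ q k hpre
      rcases subtree_T16 p i c hsub with ⟨hp, -, -⟩ | ⟨hp, -, -⟩ <;> subst hp
      · simp [srr, srl] at hne
      · obtain ⟨rfl, rfl⟩ := prefix_one hpre; rfl
  · rintro u (rfl | rfl)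
    · intro p i c hsub hne
      rcases subtree_T16 p i c hsub with ⟨hp, hi, -⟩ | ⟨hp, hi, -⟩ <;> subst hp <;> subst hi
      · exact ⟨1, 0, outcome_T16_y srl rfl rfl, outcome_T16_x sll rfl, by simp [pref16]⟩
      · simp [srl, sll] at hne
    · rintro p ⟨⟨i, c, hsub⟩, hne⟩ q k hpre
      rcases subtree_T16 p i c hsub with ⟨hp, -, -⟩ | ⟨hp, -, -⟩ <;> subst hp
      · exact absurd hpre prefix_nil
      · simp [srl, sll] at hne


end SeqGame.GameTree
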